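/- Let P be a finite set of at least two points in the Euclidean plane ℝ², let s ∈ ℝ² \ P, and let T be a minimum spanning tree of P ∪ {s}. Define D = { dist(x, y) : {x, y} is an edge of T with x, y ∈ P } ∪ { dist(x, y) : x, y ∈ P, x ≠ y, and both x and y are neighbours of s in T }. Then D is nonempty and the minimum of D equals the minimum of dist(x, y) over all pairs of distinct points x, y ∈ P. -/

import Mathlib

open scoped BigOperators

noncomputable section

/-- The Euclidean plane. -/
abbrev Pt : Type := EuclideanSpace ℝ (Fin 2)

/-- The length of an edge (an unordered pair of points): the Euclidean
distance between its endpoints. -/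
def edgeLen : Sym2 Pt → ℝ :=
  Sym2.lift ⟨fun a b => dist a b, fun a b => dist_comm a b⟩

/-- The total length of a graph on the plane: the sum of the Euclidean
lengths of its edges. -/
def glength (G : SimpleGraph Pt) : ℝ := ∑ᶠ e ∈ G.edgeSet, edgeLen e

/-- `G` is a spanning tree of the point set `V`: all its edges join points of
`V`, it is acyclic, and all points of `V` are pairwise connected in `G`. -/
def IsSpanningTreeOn (V : Set Pt) (G : SimpleGraph Pt) : Prop :=
  (∀ ⦃x y : Pt⦄, G.Adj x y → x ∈ V ∧ y ∈ V) ∧ G.IsAcyclic ∧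
    ∀ x ∈ V, ∀ y ∈ V, G.Reachable x y

/-- `G` is a minimum spanning tree of the point set `V`. -/
def IsMSTOn (V : Set Pt) (G : SimpleGraph Pt) : Prop :=
  IsSpanningTreeOn V G ∧
    ∀ H : SimpleGraph Pt, IsSpanningTreeOn V H → glength G ≤ glength H

open SimpleGraph

lemma edgeLen_mk (a b : Pt) : edgeLen s(a, b) = dist a b := rfl

lemma edgeSet_finite_of_spanning {V : Set Pt} (hV : V.Finite) {G : SimpleGraph Pt}
    (hG : ∀ ⦃x y : Pt⦄, G.Adj x y → x ∈ V ∧ y ∈ V) : G.edgeSet.Finite := by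
  apply Set.Finite.subset ((hV.prod hV).image (fun p => s(p.1, p.2)))
  intro e he
  induction e with
  | _ a b =>
    rw [SimpleGraph.mem_edgeSet] at he
    exact ⟨(a, b), ⟨(hG he).1, (hG he).2⟩, rfl⟩

lemma reachable_of_adj_reachable {G H : SimpleGraph Pt}
    (h : ∀ ⦃u v : Pt⦄, G.Adj u v → H.Reachable u v) {u v : Pt} (hr : G.Reachable u v) :
    H.Reachable u v := by
  obtain ⟨w⟩ := hr
  induction w with
  | nil => exact Reachable.refl _
  | cons h' _ ih => exact (h h').trans ih

lemma walk_avoid_reachable {G : SimpleGraph Pt} {e : Sym2 Pt} {u v : Pt} (q : G.Walk u v)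
    (hq : e ∉ q.edges) : (G \ SimpleGraph.fromEdgeSet {e}).Reachable u v := by
  refine ⟨q.transfer _ fun e' he' => ?_⟩
  rw [SimpleGraph.edgeSet_sdiff, SimpleGraph.edgeSet_fromEdgeSet]
  refine ⟨q.edges_subset_edgeSet he', fun h => ?_⟩
  rw [Set.mem_diff, Set.mem_singleton_iff] at h
  exact hq (h.1 ▸ he')

lemma reach_split {G : SimpleGraph Pt} {x y a b : Pt} {p : G.Walk x y} (hp : p.IsPath)
    (he : s(a, b) ∈ p.edges) :
    ((G \ SimpleGraph.fromEdgeSet {s(a, b)}).Reachable x a ∧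
      (G \ SimpleGraph.fromEdgeSet {s(a, b)}).Reachable b y) ∨
    ((G \ SimpleGraph.fromEdgeSet {s(a, b)}).Reachable x b ∧
      (G \ SimpleGraph.fromEdgeSet {s(a, b)}).Reachable a y) := by
  induction p with
  | nil => simp at he
  | @cons u c y h q ih =>
    rw [SimpleGraph.Walk.edges_cons, List.mem_cons] at he
    have hnodup := hp.isTrail.edges_nodup
    rw [SimpleGraph.Walk.edges_cons, List.nodup_cons] at hnodup
    rcases he with he | he
    · have hq : s(a, b) ∉ q.edges := he ▸ hnodup.1
      rcases Sym2.eq_iff.mp he.symm with ⟨rfl, rfl⟩ | ⟨rfl, rfl⟩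
      · exact Or.inl ⟨Reachable.refl _, walk_avoid_reachable q hq⟩
      · exact Or.inr ⟨Reachable.refl _, walk_avoid_reachable q hq⟩
    · have huc : (G \ SimpleGraph.fromEdgeSet {s(a, b)}).Reachable u c := by
        refine SimpleGraph.Adj.reachable ⟨h, fun hc => ?_⟩
        rw [SimpleGraph.fromEdgeSet_adj, Set.mem_singleton_iff] at hc
        exact hnodup.1 (hc.1 ▸ he)
      rcases ih hp.of_cons he with ⟨h1, h2⟩ | ⟨h1, h2⟩
      · exact Or.inl ⟨huc.trans h1, h2⟩
      · exact Or.inr ⟨huc.trans h1, h2⟩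

lemma exchange_core {V : Set Pt} (hV : V.Finite) {T : SimpleGraph Pt} (hT : IsMSTOn V T)
    {x y a b : Pt} (hx : x ∈ V) (hy : y ∈ V) (hxy : x ≠ y)
    (hab : T.Adj a b) (hnadj : s(x, y) ∉ T.edgeSet)
    (h1 : (T \ SimpleGraph.fromEdgeSet {s(a, b)}).Reachable x a)
    (h2 : (T \ SimpleGraph.fromEdgeSet {s(a, b)}).Reachable b y) :
    dist a b ≤ dist x y := by
  classical
  by_contra hlt
  push_neg at hlt
  set e : Sym2 Pt := s(a, b) with hedef
  set f : Sym2 Pt := s(x, y) with hfdef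
  set Tdel : SimpleGraph Pt := T \ SimpleGraph.fromEdgeSet {e} with hTdeldef
  set E' : Set (Sym2 Pt) := insert f (T.edgeSet \ {e}) with hE'def
  set H : SimpleGraph Pt := SimpleGraph.fromEdgeSet E' with hHdef
  have he : e ∈ T.edgeSet := hab
  have hfe : f ≠ e := fun h => hnadj (h ▸ he)
  have hTdel_edge : Tdel.edgeSet = T.edgeSet \ {e} := by
    rw [hTdeldef, SimpleGraph.edgeSet_sdiff, SimpleGraph.edgeSet_fromEdgeSet,
      SimpleGraph.edgeSet_sdiff_sdiff_isDiag]
  have hE'nd : ∀ e' ∈ E', ¬e'.IsDiag := by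
    rintro e' he'
    rcases Set.mem_insert_iff.mp he' with rfl | ⟨h', _⟩
    · rw [hfdef, Sym2.mk_isDiag_iff]; exact hxy
    · exact SimpleGraph.not_isDiag_of_mem_edgeSet T h'
  have hH_edge : H.edgeSet = E' := by
    rw [hHdef, SimpleGraph.edgeSet_fromEdgeSet]
    ext e'
    exact ⟨fun h => h.1, fun h => ⟨h, hE'nd e' h⟩⟩
  have hHxy : H.Adj x y := (SimpleGraph.fromEdgeSet_adj _).mpr ⟨Set.mem_insert _ _, hxy⟩
  -- spanning
  have hH_sub : ∀ ⦃u v : Pt⦄, H.Adj u v → u ∈ V ∧ v ∈ V := by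
    intro u v huv
    rw [hHdef, SimpleGraph.fromEdgeSet_adj] at huv
    rcases Set.mem_insert_iff.mp huv.1 with heq | ⟨h', _⟩
    · rcases Sym2.eq_iff.mp heq with ⟨rfl, rfl⟩ | ⟨rfl, rfl⟩
      · exact ⟨hx, hy⟩
      · exact ⟨hy, hx⟩
    · exact hT.1.1 ((SimpleGraph.mem_edgeSet _).mp h')
  -- H minus f equals Tdel
  have hHdel : H \ SimpleGraph.fromEdgeSet {f} = Tdel := by
    ext u v
    rw [SimpleGraph.sdiff_adj, hHdef, SimpleGraph.fromEdgeSet_adj,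
      SimpleGraph.fromEdgeSet_adj, hTdeldef, SimpleGraph.sdiff_adj,
      SimpleGraph.fromEdgeSet_adj]
    constructor
    · rintro ⟨⟨hmem, hne⟩, hnf⟩
      rcases Set.mem_insert_iff.mp hmem with heq | ⟨h', hne'⟩
      · exact absurd ⟨heq ▸ Set.mem_singleton f, hne⟩ hnf
      · exact ⟨(SimpleGraph.mem_edgeSet _).mp h', fun hc => hne' hc.1⟩
    · rintro ⟨hadj, hne⟩
      refine ⟨⟨Set.mem_insert_iff.mpr (Or.inr ⟨hadj, fun hc => hne ⟨hc, hadj.ne⟩⟩), hadj.ne⟩,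
        fun hc => hnadj ?_⟩
      rw [Set.mem_singleton_iff] at hc
      exact hc.1 ▸ ((SimpleGraph.mem_edgeSet _).mpr hadj)
  -- x, y not reachable in Tdel
  have hnreach_xy : ¬ Tdel.Reachable x y := by
    intro hr
    have hbr := SimpleGraph.isAcyclic_iff_forall_adj_isBridge.mp hT.1.2.1 hab
    exact (SimpleGraph.isBridge_iff.mp hbr) (h1.symm.trans (hr.trans h2.symm))
  -- acyclicity of H
  have hH_acyc : H.IsAcyclic := by
    intro v' c hc
    have hbrH : H.IsBridge f := SimpleGraph.isBridge_iff.mpr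
      (by show ¬ (H \ SimpleGraph.fromEdgeSet {f}).Reachable x y; rw [hHdel]; exact hnreach_xy)
    have hfc : f ∉ c.edges :=
      (SimpleGraph.isBridge_iff_mem_and_forall_cycle_notMem (G := H) (e := f) hHxy).mp hbrH c hc
    have hsub : ∀ e' ∈ c.edges, e' ∈ Tdel.edgeSet := by
      intro e' he'
      have h' := c.edges_subset_edgeSet he'
      rw [hH_edge] at h'
      rcases Set.mem_insert_iff.mp h' with rfl | h'
      · exact absurd he' hfc
      · rw [hTdel_edge]; exact h'
    have hsub2 : ∀ e' ∈ (c.transfer Tdel hsub).edges, e' ∈ T.edgeSet := by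
      intro e' he'
      have h' := (c.transfer Tdel hsub).edges_subset_edgeSet he'
      rw [hTdel_edge] at h'
      exact h'.1
    exact hT.1.2.1 ((c.transfer Tdel hsub).transfer T hsub2)
      ((hc.transfer hsub).transfer hsub2)
  -- connectivity of H on V
  have hTdel_le_H : Tdel ≤ H := by
    intro w1 w2 hw
    rw [hTdeldef, SimpleGraph.sdiff_adj, SimpleGraph.fromEdgeSet_adj] at hw
    exact (SimpleGraph.fromEdgeSet_adj _).mpr
      ⟨Set.mem_insert_iff.mpr (Or.inr ⟨hw.1, fun hc => hw.2 ⟨hc, hw.1.ne⟩⟩), hw.1.ne⟩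
  have hH_conn : ∀ u ∈ V, ∀ v ∈ V, H.Reachable u v := by
    intro u hu v hv
    refine reachable_of_adj_reachable ?_ (hT.1.2.2 u hu v hv)
    intro u' v' huv
    by_cases hce : s(u', v') = e
    · have hreach_ab : H.Reachable a b :=
        (h1.symm.mono hTdel_le_H).trans (hHxy.reachable.trans (h2.symm.mono hTdel_le_H))
      rcases Sym2.eq_iff.mp hce with ⟨rfl, rfl⟩ | ⟨rfl, rfl⟩
      · exact hreach_ab
      · exact hreach_ab.symm
    · refine SimpleGraph.Adj.reachable ((SimpleGraph.fromEdgeSet_adj _).mpr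
        ⟨Set.mem_insert_iff.mpr (Or.inr ⟨huv, hce⟩), huv.ne⟩)
  -- length computation
  have hTfin : T.edgeSet.Finite := edgeSet_finite_of_spanning hV hT.1.1
  have heTf : e ∈ hTfin.toFinset := hTfin.mem_toFinset.mpr he
  have hfTf : f ∉ hTfin.toFinset := fun h => hnadj (hTfin.mem_toFinset.mp h)
  have hHfin : H.edgeSet.Finite := hH_edge ▸ ((hTfin.diff (t := {e})).insert f)
  have hgT : glength T = ∑ e' ∈ hTfin.toFinset, edgeLen e' :=
    finsum_mem_eq_finite_toFinset_sum _ hTfin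
  have hgH : glength H = ∑ e' ∈ insert f (hTfin.toFinset.erase e), edgeLen e' := by
    rw [glength, finsum_mem_eq_finite_toFinset_sum _ hHfin]
    apply Finset.sum_congr _ (fun _ _ => rfl)
    ext e'
    rw [Set.Finite.mem_toFinset, hH_edge, hE'def]
    simp only [Set.mem_insert_iff, Set.mem_diff, Set.mem_singleton_iff, Finset.mem_insert,
      Finset.mem_erase, Set.Finite.mem_toFinset]
    tauto
  have hsum : glength H = dist x y + (glength T - dist a b) := by
    rw [hgH, Finset.sum_insert (fun h => hfTf (Finset.mem_of_mem_erase h)),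
      Finset.sum_erase_eq_sub heTf, ← hgT]
    rfl
  have hle := hT.2 H ⟨hH_sub, hH_acyc, hH_conn⟩
  rw [hsum] at hle
  linarith

lemma exchange {V : Set Pt} (hV : V.Finite) {T : SimpleGraph Pt} (hT : IsMSTOn V T)
    {x y : Pt} (hx : x ∈ V) (hy : y ∈ V) (hxy : x ≠ y)
    {p : T.Walk x y} (hp : p.IsPath) {a b : Pt} (he : s(a, b) ∈ p.edges) :
    dist a b ≤ dist x y := by
  by_cases hadj : T.Adj x y
  · have huniq := SimpleGraph.isAcyclic_iff_path_unique.mp hT.1.2.1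
      (⟨p, hp⟩ : T.Path x y) (SimpleGraph.Path.singleton hadj)
    have hpw : p = SimpleGraph.Walk.cons hadj SimpleGraph.Walk.nil :=
      congrArg Subtype.val huniq
    rw [hpw] at he
    simp only [SimpleGraph.Walk.edges_cons, SimpleGraph.Walk.edges_nil,
      List.mem_singleton] at he
    rcases Sym2.eq_iff.mp he with ⟨rfl, rfl⟩ | ⟨rfl, rfl⟩
    · exact le_refl _
    · exact le_of_eq (_root_.dist_comm a b)
  · have hnadj : s(x, y) ∉ T.edgeSet := hadj
    rcases reach_split hp he with ⟨h1, h2⟩ | ⟨h1, h2⟩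
    · exact exchange_core hV hT hx hy hxy (p.adj_of_mem_edges he) hnadj h1 h2
    · have := exchange_core hV hT hx hy hxy (p.adj_of_mem_edges he).symm hnadj
        (by rwa [Sym2.eq_swap]) (by rwa [Sym2.eq_swap])
      rwa [_root_.dist_comm b a] at this

theorem stmt12 (P : Finset Pt) (hP : 2 ≤ P.card) (s : Pt) (hs : s ∉ P)
    (T : SimpleGraph Pt) (hT : IsMSTOn (insert s ↑P) T)
    (D : Set ℝ)
    (hD : D = { d | ∃ x ∈ (P : Set Pt), ∃ y ∈ (P : Set Pt),
        s(x, y) ∈ T.edgeSet ∧ d = dist x y } ∪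
      { d | ∃ x ∈ (P : Set Pt), ∃ y ∈ (P : Set Pt),
        x ≠ y ∧ T.Adj s x ∧ T.Adj s y ∧ d = dist x y }) :
    D.Nonempty ∧ ∃ m : ℝ, IsLeast D m ∧
      IsLeast { d | ∃ x ∈ (P : Set Pt), ∃ y ∈ (P : Set Pt), x ≠ y ∧ d = dist x y } m := by
  classical
  set V : Set Pt := insert s ↑P with hVdef
  have hVfin : V.Finite := (P.finite_toSet).insert s
  set F : Finset ℝ :=
    ((P ×ˢ P).filter (fun q => q.1 ≠ q.2)).image (fun q => dist q.1 q.2) with hFdef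
  have hmemF : ∀ u v : Pt, u ∈ P → v ∈ P → u ≠ v → dist u v ∈ F := by
    intro u v hu hv huv
    exact Finset.mem_image.mpr ⟨(u, v),
      Finset.mem_filter.mpr ⟨Finset.mem_product.mpr ⟨hu, hv⟩, huv⟩, rfl⟩
  have hFne : F.Nonempty := by
    obtain ⟨u, hu, v, hv, huv⟩ := Finset.one_lt_card.mp (lt_of_lt_of_le one_lt_two hP)
    exact ⟨dist u v, hmemF u v hu hv huv⟩
  set m : ℝ := F.min' hFne with hmdef
  have hmin : ∀ u v : Pt, u ∈ P → v ∈ P → u ≠ v → m ≤ dist u v :=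
    fun u v hu hv huv => F.min'_le _ (hmemF u v hu hv huv)
  obtain ⟨⟨x0, y0⟩, hmem0, heq0⟩ := Finset.mem_image.mp (F.min'_mem hFne)
  obtain ⟨hmemP, hne0⟩ := Finset.mem_filter.mp hmem0
  obtain ⟨hx0P, hy0P⟩ := Finset.mem_product.mp hmemP
  simp only at heq0 hne0
  have hx0V : x0 ∈ V := Set.mem_insert_iff.mpr (Or.inr hx0P)
  have hy0V : y0 ∈ V := Set.mem_insert_iff.mpr (Or.inr hy0P)
  have hx0s : x0 ≠ s := fun h => hs (h ▸ hx0P)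
  have hy0s : y0 ≠ s := fun h => hs (h ▸ hy0P)
  -- m ∈ D
  have hmD : m ∈ D := by
    obtain ⟨w⟩ := hT.1.2.2 x0 hx0V y0 hy0V
    obtain ⟨pw, hp⟩ : ∃ pw : T.Walk x0 y0, pw.IsPath := ⟨w.toPath, w.toPath.2⟩
    by_cases hcase : ∃ a b : Pt, s(a, b) ∈ pw.edges ∧ a ≠ s ∧ b ≠ s
    · obtain ⟨a, b, he, has, hbs⟩ := hcase
      have hadj : T.Adj a b := pw.adj_of_mem_edges he
      have haP : a ∈ (P : Set Pt) := by
        rcases Set.mem_insert_iff.mp (hT.1.1 hadj).1 with h | h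
        · exact absurd h has
        · exact h
      have hbP : b ∈ (P : Set Pt) := by
        rcases Set.mem_insert_iff.mp (hT.1.1 hadj).2 with h | h
        · exact absurd h hbs
        · exact h
      have hle : dist a b ≤ dist x0 y0 := exchange hVfin hT hx0V hy0V hne0 hp he
      have hge : m ≤ dist a b := hmin a b haP hbP hadj.ne
      have : m = dist a b := le_antisymm hge (hle.trans (le_of_eq heq0))
      rw [hD]
      exact Or.inl ⟨a, haP, b, hbP, hadj, this⟩
    · push_neg at hcase
      cases pw with
      | nil => exact absurd rfl hne0
      | @cons _ c _ hadj q =>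
        have hcs : c = s := by
          by_contra hc
          exact hc (hcase x0 c (by simp) hx0s)
        cases q with
        | nil => exact (hs (Finset.mem_coe.mp (hcs ▸ hy0P))).elim
        | @cons _ d _ hadj2 r =>
          cases r with
          | nil =>
            rw [hD]
            exact Or.inr ⟨x0, hx0P, y0, hy0P, hne0, (hcs ▸ hadj).symm, hcs ▸ hadj2,
              heq0.symm⟩
          | @cons _ d' _ hadj3 r' =>
            exfalso
            have hds : d ≠ s := fun h => hadj2.ne (hcs.trans h.symm)
            have hd's : d' = s := hcase d d' (by simp) hds
            have hnd := hp.support_nodup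
            rw [SimpleGraph.Walk.support_cons, SimpleGraph.Walk.support_cons,
              SimpleGraph.Walk.support_cons, List.nodup_cons, List.nodup_cons] at hnd
            refine hnd.2.1 (List.mem_cons_of_mem d ?_)
            rw [hcs, ← hd's]
            exact r'.start_mem_support
  -- assemble
  have hDsubF : ∀ d ∈ D, d ∈ F := by
    intro d hd
    rw [hD] at hd
    rcases hd with ⟨x, hx, y, hy, he, rfl⟩ | ⟨x, hx, y, hy, hne, _, _, rfl⟩
    · exact hmemF x y hx hy ((SimpleGraph.mem_edgeSet _).mp he).ne
    · exact hmemF x y hx hy hne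
  refine ⟨⟨m, hmD⟩, m, ⟨hmD, fun d hd => F.min'_le d (hDsubF d hd)⟩, ?_, ?_⟩
  · exact ⟨x0, hx0P, y0, hy0P, hne0, heq0.symm⟩
  · intro d hd
    obtain ⟨x, hx, y, hy, hne, rfl⟩ := hd
    exact hmin x y hx hy hne

end
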